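/- Let S : ℕ with S ≥ 1, let w : Fin S → ℝ satisfy w s > 0 for all s and Σ_s w s = 1, let L : Fin S → ℝ, and let C > 0. Define KL(q‖w) := Σ_s q s · log (q s / w s) for q in the simplex {q : Fin S → ℝ | ∀ s, 0 ≤ q s, and Σ_s q s = 1} (with the Lean convention Real.log 0 = 0, so terms with q s = 0 vanish). Then sSup { Σ_s q s · L s : q in the simplex with KL(q‖w) ≤ C } = ⨅ (λ : ℝ) (hλ : 0 < λ), (C + log (Σ_s w s · exp(λ · L s))) / λ. Moreover the least-favorable weights have the entropic-tilting form q_s ∝ w_s · exp(λ·L_s). -/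

import Mathlib

open Real

/-- Discrete Kullback--Leibler divergence `KL(q‖w) = Σ_s q_s log(q_s / w_s)`
(with the convention `Real.log 0 = 0`, so terms with `q s = 0` vanish). -/
noncomputable def dKL {S : ℕ} (q w : Fin S → ℝ) : ℝ :=
  ∑ s, q s * Real.log (q s / w s)

/-- Entropically tilted weights `q_s ∝ w_s exp(λ L_s)`. -/
noncomputable def tiltWeights {S : ℕ} (w L : Fin S → ℝ) (l : ℝ) : Fin S → ℝ :=
  fun s => w s * Real.exp (l * L s) / ∑ r, w r * Real.exp (l * L r)

lemma gibbs_aux {S : ℕ} (q p : Fin S → ℝ) (hq : ∀ s, 0 ≤ q s) (hp : ∀ s, 0 < p s)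
    (hq1 : ∑ s, q s = 1) (hp1 : ∑ s, p s = 1) :
    0 ≤ ∑ s, q s * Real.log (q s / p s) := by
  have h : ∀ s : Fin S, q s - p s ≤ q s * Real.log (q s / p s) := by
    intro s
    rcases eq_or_lt_of_le (hq s) with h0 | h0
    · rw [← h0]; simp; linarith [hp s]
    · have hps := hp s
      have hlog : Real.log (p s / q s) ≤ p s / q s - 1 :=
        Real.log_le_sub_one_of_pos (by positivity)
      have hneg : Real.log (q s / p s) = - Real.log (p s / q s) := by
        rw [← Real.log_inv]; congr 1; field_simp
      have h2 : q s * Real.log (p s / q s) ≤ q s * (p s / q s - 1) :=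
        mul_le_mul_of_nonneg_left hlog h0.le
      have h3 : q s * (p s / q s - 1) = p s - q s := by field_simp
      rw [hneg]; nlinarith
  have h0 : (0:ℝ) = (∑ s, q s) - ∑ s, p s := by rw [hq1, hp1]; ring
  rw [h0, ← Finset.sum_sub_distrib]
  exact Finset.sum_le_sum fun s _ => h s

section
variable {S : ℕ} (w L : Fin S → ℝ) (hS : 1 ≤ S) (hw : ∀ s, 0 < w s)
include hS hw

lemma Zpos (l : ℝ) : 0 < ∑ s, w s * Real.exp (l * L s) := by
  haveI : Nonempty (Fin S) := ⟨⟨0, hS⟩⟩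
  exact Finset.sum_pos (fun s _ => mul_pos (hw s) (Real.exp_pos _)) Finset.univ_nonempty

lemma tilt_pos (l : ℝ) (s : Fin S) : 0 < tiltWeights w L l s := by
  have := Zpos w L hS hw l
  have := hw s
  unfold tiltWeights
  positivity

lemma tilt_sum (l : ℝ) : ∑ s, tiltWeights w L l s = 1 := by
  have hZ := (Zpos w L hS hw l).ne'
  unfold tiltWeights
  rw [← Finset.sum_div, div_self hZ]

lemma tilt_id (l : ℝ) (q : Fin S → ℝ) (hq : ∀ s, 0 ≤ q s) (hq1 : ∑ s, q s = 1) :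
    ∑ s, q s * Real.log (q s / tiltWeights w L l s)
      = (∑ s, q s * Real.log (q s / w s)) - l * (∑ s, q s * L s)
        + Real.log (∑ r, w r * Real.exp (l * L r)) := by
  have hZ := Zpos w L hS hw l
  have hterm : ∀ s : Fin S, q s * Real.log (q s / tiltWeights w L l s)
      = q s * Real.log (q s / w s) - q s * (l * L s)
        + q s * Real.log (∑ r, w r * Real.exp (l * L r)) := by
    intro s
    rcases eq_or_lt_of_le (hq s) with h0 | h0
    · rw [← h0]; ring_nf
    · have hws := hw s
      have hts := tilt_pos w L hS hw l s
      rw [Real.log_div h0.ne' hts.ne', Real.log_div h0.ne' hws.ne']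
      unfold tiltWeights
      rw [Real.log_div (by positivity) hZ.ne', Real.log_mul hws.ne' (Real.exp_ne_zero _),
        Real.log_exp]
      ring
  rw [Finset.sum_congr rfl (fun s _ => hterm s), Finset.sum_add_distrib,
    Finset.sum_sub_distrib, ← Finset.sum_mul, hq1, one_mul]
  congr 2
  rw [Finset.mul_sum]
  exact Finset.sum_congr rfl (fun s _ => by ring)
end


/-- Entropic-tilting (Donsker–Varadhan) duality for the worst-case risk over a discrete
KL ball: the supremum of `Σ_s q_s L_s` over the simplex with `KL(q‖w) ≤ C` equals
`inf_{λ>0} (C + log Σ_s w_s e^{λ L_s}) / λ`, and the supremum is approached by weights of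
the entropic-tilting form `q_s ∝ w_s e^{λ L_s}`. -/
theorem entropic_tilting_duality (S : ℕ) (hS : 1 ≤ S) (w : Fin S → ℝ)
    (hw : ∀ s, 0 < w s) (hwsum : ∑ s, w s = 1) (L : Fin S → ℝ) (C : ℝ) (hC : 0 < C) :
    sSup { x : ℝ | ∃ q : Fin S → ℝ, (∀ s, 0 ≤ q s) ∧ (∑ s, q s = 1) ∧
          dKL q w ≤ C ∧ x = ∑ s, q s * L s } =
        sInf ((fun l : ℝ => (C + Real.log (∑ s, w s * Real.exp (l * L s))) / l) ''
          Set.Ioi 0) ∧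
      ∀ ε > 0, ∃ l : ℝ, dKL (tiltWeights w L l) w ≤ C ∧
        sSup { x : ℝ | ∃ q : Fin S → ℝ, (∀ s, 0 ≤ q s) ∧ (∑ s, q s = 1) ∧
            dKL q w ≤ C ∧ x = ∑ s, q s * L s } ≤
          (∑ s, tiltWeights w L l s * L s) + ε := by
  haveI : Nonempty (Fin S) := ⟨⟨0, hS⟩⟩
  set P := { x : ℝ | ∃ q : Fin S → ℝ, (∀ s, 0 ≤ q s) ∧ (∑ s, q s = 1) ∧
      dKL q w ≤ C ∧ x = ∑ s, q s * L s } with hPdef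
  set D := ((fun l : ℝ => (C + Real.log (∑ s, w s * Real.exp (l * L s))) / l) ''
      Set.Ioi 0) with hDdef
  have hZpos : ∀ l : ℝ, 0 < ∑ s, w s * Real.exp (l * L s) := Zpos w L hS hw
  have htpos : ∀ l s, 0 < tiltWeights w L l s := tilt_pos w L hS hw
  have htsum : ∀ l, ∑ s, tiltWeights w L l s = 1 := tilt_sum w L hS hw
  -- formula for g(l) := dKL (tilt l) w
  have hgform : ∀ l : ℝ, dKL (tiltWeights w L l) w
      = l * (∑ s, tiltWeights w L l s * L s)
        - Real.log (∑ s, w s * Real.exp (l * L s)) := by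
    intro l
    have h := tilt_id w L hS hw l (tiltWeights w L l) (fun s => (htpos l s).le) (htsum l)
    have h0 : ∑ s, tiltWeights w L l s * Real.log (tiltWeights w L l s / tiltWeights w L l s)
        = 0 := by
      apply Finset.sum_eq_zero; intro s _
      rw [div_self (htpos l s).ne', Real.log_one, mul_zero]
    rw [h0] at h
    unfold dKL
    linarith
  have hgnn : ∀ l : ℝ, 0 ≤ dKL (tiltWeights w L l) w :=
    fun l => gibbs_aux _ w (fun s => (htpos l s).le) hw (htsum l) hwsum
  -- weak duality
  have hweak : ∀ l : ℝ, 0 < l → ∀ q : Fin S → ℝ, (∀ s, 0 ≤ q s) → (∑ s, q s = 1) →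
      dKL q w ≤ C →
      ∑ s, q s * L s ≤ (C + Real.log (∑ s, w s * Real.exp (l * L s))) / l := by
    intro l hl q hq hq1 hqC
    have h0 : 0 ≤ ∑ s, q s * Real.log (q s / tiltWeights w L l s) :=
      gibbs_aux q _ hq (htpos l) hq1 (htsum l)
    rw [tilt_id w L hS hw l q hq hq1] at h0
    rw [le_div_iff₀ hl]
    unfold dKL at hqC
    nlinarith
  -- continuity of g
  have hgc : Continuous (fun l => dKL (tiltWeights w L l) w) := by
    have hZc : Continuous (fun l : ℝ => ∑ s, w s * Real.exp (l * L s)) :=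
      continuous_finset_sum _ (fun s _ =>
        continuous_const.mul ((continuous_id.mul continuous_const).rexp))
    have hNc : Continuous (fun l : ℝ => ∑ s, w s * Real.exp (l * L s) * L s) :=
      continuous_finset_sum _ (fun s _ =>
        (continuous_const.mul ((continuous_id.mul continuous_const).rexp)).mul continuous_const)
    have heq : (fun l => dKL (tiltWeights w L l) w) = fun l =>
        l * ((∑ s, w s * Real.exp (l * L s) * L s) / (∑ s, w s * Real.exp (l * L s)))
          - Real.log (∑ s, w s * Real.exp (l * L s)) := by
      funext l
      rw [hgform l]
      congr 2
      rw [Finset.sum_div]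
      exact Finset.sum_congr rfl (fun s _ => by unfold tiltWeights; rw [div_mul_eq_mul_div])
    rw [heq]
    exact (continuous_id.mul (hNc.div hZc fun l => (hZpos l).ne')).sub
      (hZc.log fun l => (hZpos l).ne')
  have hg0 : dKL (tiltWeights w L 0) w = 0 := by
    rw [hgform 0]
    simp [hwsum]
  -- key approximation lemma
  have hkey : ∀ ε : ℝ, 0 < ε → ∃ l : ℝ, 0 < l ∧ dKL (tiltWeights w L l) w ≤ C ∧
      (C - dKL (tiltWeights w L l) w) / l ≤ ε := by
    intro ε hε
    by_cases h : dKL (tiltWeights w L (C / ε)) w ≤ C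
    · refine ⟨C / ε, by positivity, h, ?_⟩
      have h1 : (C - dKL (tiltWeights w L (C/ε)) w) / (C/ε) ≤ C / (C/ε) :=
        div_le_div_of_nonneg_right (by linarith [hgnn (C/ε)]) (by positivity)
      have h2 : C / (C/ε) = ε := by field_simp
      linarith
    · have hCmem : C ∈ Set.Icc (dKL (tiltWeights w L 0) w) (dKL (tiltWeights w L (C/ε)) w) :=
        ⟨by rw [hg0]; exact hC.le, (not_le.mp h).le⟩
      obtain ⟨l, hl, hgl⟩ := intermediate_value_Icc (by positivity : (0:ℝ) ≤ C/ε)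
        hgc.continuousOn hCmem
      have hgl' : dKL (tiltWeights w L l) w = C := hgl
      have hlpos : 0 < l := by
        rcases hl.1.lt_or_eq with h' | h'
        · exact h'
        · exfalso; rw [← h', hg0] at hgl'; linarith
      refine ⟨l, hlpos, le_of_eq hgl', ?_⟩
      rw [hgl', sub_self, zero_div]
      exact hε.le
  -- primal set nonempty and bounded above
  have hdKLww : dKL w w = 0 := by
    unfold dKL
    exact Finset.sum_eq_zero fun s _ => by rw [div_self (hw s).ne', Real.log_one, mul_zero]
  have hwP : (∑ s, w s * L s) ∈ P :=
    ⟨w, fun s => (hw s).le, hwsum, by rw [hdKLww]; exact hC.le, rfl⟩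
  have hPne : P.Nonempty := ⟨_, hwP⟩
  have hPbdd : BddAbove P := by
    refine ⟨(C + Real.log (∑ s, w s * Real.exp (1 * L s))) / 1, fun x hx => ?_⟩
    obtain ⟨q, h1, h2, h3, rfl⟩ := hx
    exact hweak 1 one_pos q h1 h2 h3
  have hDne : D.Nonempty := ⟨_, ⟨1, Set.mem_Ioi.mpr one_pos, rfl⟩⟩
  have hDbdd : BddBelow D := by
    refine ⟨∑ s, w s * L s, fun d hd => ?_⟩
    obtain ⟨l, hl, rfl⟩ := hd
    exact hweak l hl w (fun s => (hw s).le) hwsum (by rw [hdKLww]; exact hC.le)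
  -- sSup P ≤ sInf D
  have hle : sSup P ≤ sInf D := by
    apply le_csInf hDne
    rintro b ⟨l, hl, rfl⟩
    apply csSup_le hPne
    rintro x ⟨q, h1, h2, h3, rfl⟩
    exact hweak l hl q h1 h2 h3
  -- dual value at l equals tilt risk plus slack
  have hdualval : ∀ l : ℝ, 0 < l →
      (C + Real.log (∑ s, w s * Real.exp (l * L s))) / l
        = (∑ s, tiltWeights w L l s * L s) + (C - dKL (tiltWeights w L l) w) / l := by
    intro l hl
    rw [hgform l]
    field_simp
    ring
  have hge : sInf D ≤ sSup P := by
    apply le_of_forall_pos_le_add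
    intro ε hε
    obtain ⟨l, hl, hfeas, hslack⟩ := hkey ε hε
    have hTP : (∑ s, tiltWeights w L l s * L s) ∈ P :=
      ⟨tiltWeights w L l, fun s => (htpos l s).le, htsum l, hfeas, rfl⟩
    have h1 : sInf D ≤ (C + Real.log (∑ s, w s * Real.exp (l * L s))) / l :=
      csInf_le hDbdd ⟨l, hl, rfl⟩
    have h2 : (∑ s, tiltWeights w L l s * L s) ≤ sSup P := le_csSup hPbdd hTP
    rw [hdualval l hl] at h1
    linarith
  refine ⟨le_antisymm hle hge, ?_⟩
  intro ε hε
  obtain ⟨l, hl, hfeas, hslack⟩ := hkey ε hε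
  refine ⟨l, hfeas, ?_⟩
  have h1 : sInf D ≤ (C + Real.log (∑ s, w s * Real.exp (l * L s))) / l :=
    csInf_le hDbdd ⟨l, hl, rfl⟩
  rw [hdualval l hl] at h1
  have := le_antisymm hle hge
  linarith
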